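/- Mutual information upper bound via pairwise KL affinities: Let (Ω, μ) be a σ-finite measure space, let p₁, …, p_M be probability densities with respect to μ, and let π₁, …, π_M > 0 with Σ_{k=1}^M π_k = 1. Set p = Σ_{j=1}^M π_j p_j and for each pair (k,j) assume D(p_k‖p_j) = ∫ p_k ln(p_k/p_j) dμ is well-defined and finite. Then Σ_{k=1}^M π_k D(p_k‖p) ≤ −Σ_{k=1}^M π_k ln( Σ_{j=1}^M π_j e^{−D(p_k‖p_j)} ). -/

import Mathlib

open MeasureTheory

section Aux

lemma aux_sum_le_prod_one_add {ι : Type*} (s : Finset ι) (a : ι → ℝ)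
    (ha : ∀ i ∈ s, 0 ≤ a i) : ∑ i ∈ s, a i ≤ ∏ i ∈ s, (1 + a i) := by
  classical
  induction s using Finset.cons_induction with
  | empty => simp
  | cons i s hi ih =>
    rw [Finset.sum_cons, Finset.prod_cons]
    have h1 : ∀ j ∈ s, 0 ≤ a j := fun j hj => ha j (Finset.mem_cons_of_mem hj)
    have h2 : ∑ j ∈ s, a j ≤ ∏ j ∈ s, (1 + a j) := ih h1
    have h3 : (1:ℝ) ≤ ∏ j ∈ s, (1 + a j) := by
      calc (1:ℝ) = ∏ j ∈ s, 1 := by simp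
        _ ≤ ∏ j ∈ s, (1 + a j) :=
          Finset.prod_le_prod (fun j hj => by norm_num) (fun j hj => by linarith [h1 j hj])
    have h0 : 0 ≤ a i := ha i (Finset.mem_cons_self i s)
    nlinarith

lemma aux_log_one_add_le (a : ℝ) (ha : 0 < a) :
    Real.log (1 + a) ≤ Real.log 2 + |Real.log a| := by
  rcases le_total a 1 with h | h
  · have h1 : Real.log (1 + a) ≤ Real.log 2 :=
      Real.log_le_log (by linarith) (by linarith)
    have := abs_nonneg (Real.log a)
    linarith
  · have h2 : Real.log (1 + a) ≤ Real.log (2 * a) :=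
      Real.log_le_log (by linarith) (by linarith)
    rw [Real.log_mul (by norm_num) (by linarith)] at h2
    have := le_abs_self (Real.log a)
    linarith

/-- Key per-class estimate. -/
lemma aux_key_step {Ω : Type*} [MeasurableSpace Ω] (μ : Measure Ω)
    (M : ℕ) (p : Fin M → Ω → ℝ) (π : Fin M → ℝ) (k : Fin M)
    (hp_meas : ∀ k, Measurable (p k))
    (hp_nonneg : ∀ k, ∀ x, 0 ≤ p k x)
    (hp_prob : ∀ k, ∫ x, p k x ∂μ = 1)
    (hπ_pos : ∀ k, 0 < π k) (hπ_sum : ∑ k, π k = 1)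
    (hac : ∀ j, ∀ᵐ x ∂μ, p j x = 0 → p k x = 0)
    (hint : ∀ j, Integrable (fun x => p k x * Real.log (p k x / p j x)) μ) :
    ∫ x, p k x * Real.log (p k x / (∑ j, π j * p j x)) ∂μ ≤
      - Real.log (∑ j, π j * Real.exp (-∫ x, p k x * Real.log (p k x / p j x) ∂μ)) := by
  classical
  set D : Fin M → ℝ := fun j => ∫ x, p k x * Real.log (p k x / p j x) ∂μ with hD
  set S : ℝ := ∑ j, π j * Real.exp (-D j) with hSdef
  have hS : 0 < S :=
    Finset.sum_pos (fun j _ => mul_pos (hπ_pos j) (Real.exp_pos _)) ⟨k, Finset.mem_univ k⟩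
  set w : Fin M → ℝ := fun j => π j * Real.exp (-D j) / S with hw
  have hw_pos : ∀ j, 0 < w j := fun j => div_pos (mul_pos (hπ_pos j) (Real.exp_pos _)) hS
  have hw_sum : ∑ j, w j = 1 := by
    rw [hw]
    rw [← Finset.sum_div, ← hSdef, div_self (ne_of_gt hS)]
  set mix : Ω → ℝ := fun x => ∑ j, π j * p j x with hmix
  have hmix_meas : Measurable mix :=
    Finset.measurable_sum _ fun j _ => (measurable_const.mul (hp_meas j))
  have hpk_int : Integrable (p k) μ := by
    by_contra h
    have := hp_prob k
    rw [integral_undef h] at this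
    norm_num at this
  have hA : ∀ᵐ x ∂μ, ∀ j, p j x = 0 → p k x = 0 := (MeasureTheory.ae_all_iff).2 hac
  set f : Ω → ℝ := fun x => p k x * Real.log (p k x / mix x) with hf
  set U : Ω → ℝ := fun x => (-Real.log S) * p k x +
      ∑ j, w j * (p k x * Real.log (p k x / p j x) - D j * p k x) with hU
  have hf_meas : AEStronglyMeasurable f μ :=
    ((hp_meas k).mul (Real.measurable_log.comp ((hp_meas k).div hmix_meas))).aestronglyMeasurable
  have hU_int : Integrable U μ := by
    apply Integrable.add (hpk_int.const_mul _)
    apply integrable_finset_sum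
    intro j _
    exact ((hint j).sub (hpk_int.const_mul (D j))).const_mul _
  -- pointwise upper bound f ≤ U a.e.
  have h_main : ∀ᵐ x ∂μ, f x ≤ U x := by
    filter_upwards [hA] with x hx
    by_cases hpk0 : p k x = 0
    · simp [hf, hU, hpk0]
    · have hpk : 0 < p k x := lt_of_le_of_ne (hp_nonneg k x) (Ne.symm hpk0)
      have hpj : ∀ j, 0 < p j x := fun j =>
        lt_of_le_of_ne (hp_nonneg j x) (fun h => hpk0 (hx j h.symm))
      have hmix_pos : 0 < mix x :=
        Finset.sum_pos (fun j _ => mul_pos (hπ_pos j) (hpj j)) ⟨k, Finset.mem_univ k⟩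
      set b : Fin M → ℝ := fun j => p j x / p k x * Real.exp (D j) with hb
      have hb_pos : ∀ j, 0 < b j := fun j =>
        mul_pos (div_pos (hpj j) hpk) (Real.exp_pos _)
      have hjensen : ∑ j, w j • Real.log (b j) ≤ Real.log (∑ j, w j • b j) :=
        (strictConcaveOn_log_Ioi.concaveOn).le_map_sum
          (fun j _ => (hw_pos j).le) hw_sum (fun j _ => hb_pos j)
      simp only [smul_eq_mul] at hjensen
      have hsum_b : ∑ j, w j * b j = mix x / (p k x * S) := by
        have hterm : ∀ j, w j * b j = π j * p j x / (p k x * S) := by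
          intro j
          simp only [hw, hb, Real.exp_neg]
          field_simp
        rw [Finset.sum_congr rfl fun j _ => hterm j, ← Finset.sum_div]
      have hlog_b : ∀ j, Real.log (b j) = Real.log (p j x) - Real.log (p k x) + D j := by
        intro j
        simp only [hb]
        rw [Real.log_mul (ne_of_gt (div_pos (hpj j) hpk)) (Real.exp_ne_zero _),
          Real.log_div (ne_of_gt (hpj j)) (ne_of_gt hpk), Real.log_exp]
      have hlog_rhs : Real.log (mix x / (p k x * S)) =
          Real.log (mix x) - Real.log (p k x) - Real.log S := by
        rw [Real.log_div (ne_of_gt hmix_pos) (by positivity),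
          Real.log_mul (ne_of_gt hpk) (ne_of_gt hS)]
        ring
      set T : ℝ := ∑ j, w j * (Real.log (p j x) + D j) with hT
      have hsum_log : ∑ j, w j * Real.log (b j) = T - Real.log (p k x) := by
        have hterm : ∀ j, w j * Real.log (b j)
            = w j * (Real.log (p j x) + D j) - w j * Real.log (p k x) := by
          intro j
          rw [hlog_b j]
          ring
        rw [Finset.sum_congr rfl fun j _ => hterm j, Finset.sum_sub_distrib,
          ← Finset.sum_mul, hw_sum, one_mul, ← hT]
      have hTle : T ≤ Real.log (mix x) - Real.log S := by
        rw [hsum_log, hsum_b, hlog_rhs] at hjensen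
        linarith
      have hUsum : ∑ j, w j * (p k x * Real.log (p k x / p j x) - D j * p k x)
          = p k x * Real.log (p k x) - p k x * T := by
        have hterm2 : ∀ j, w j * (p k x * Real.log (p k x / p j x) - D j * p k x)
            = p k x * (w j * Real.log (p k x) - w j * (Real.log (p j x) + D j)) := by
          intro j
          rw [Real.log_div (ne_of_gt hpk) (ne_of_gt (hpj j))]
          ring
        rw [Finset.sum_congr rfl fun j _ => hterm2 j, ← Finset.mul_sum,
          Finset.sum_sub_distrib, ← Finset.sum_mul, hw_sum, one_mul, ← hT]
        ring
      simp only [hf, hU, hUsum]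
      rw [Real.log_div (ne_of_gt hpk) (ne_of_gt hmix_pos)]
      nlinarith [mul_le_mul_of_nonneg_left hTle hpk.le]
  -- integrability of f via a sandwich bound
  have habs : ∀ᵐ x ∂μ, ‖f x‖ ≤ (|Real.log (π k)| + M * Real.log 2) * p k x
      + ∑ j, |p k x * Real.log (p k x / p j x)| := by
    filter_upwards [hA] with x hx
    by_cases hpk0 : p k x = 0
    · simp [hf, hpk0]
    · have hpk : 0 < p k x := lt_of_le_of_ne (hp_nonneg k x) (Ne.symm hpk0)
      have hpj : ∀ j, 0 < p j x := fun j =>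
        lt_of_le_of_ne (hp_nonneg j x) (fun h => hpk0 (hx j h.symm))
      have hmix_pos : 0 < mix x :=
        Finset.sum_pos (fun j _ => mul_pos (hπ_pos j) (hpj j)) ⟨k, Finset.mem_univ k⟩
      have habs_sum_nonneg : (0:ℝ) ≤ ∑ j, |p k x * Real.log (p k x / p j x)| :=
        Finset.sum_nonneg fun j _ => abs_nonneg _
      have hlog2 : (0:ℝ) ≤ Real.log 2 := Real.log_nonneg (by norm_num)
      -- upper bound
      have hub : f x ≤ |Real.log (π k)| * p k x := by
        have h1 : π k * p k x ≤ mix x :=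
          Finset.single_le_sum (fun j _ => mul_nonneg (hπ_pos j).le (hp_nonneg j x))
            (Finset.mem_univ k)
        have h2 : Real.log (p k x / mix x) ≤ -Real.log (π k) := by
          rw [Real.log_div (ne_of_gt hpk) (ne_of_gt hmix_pos)]
          have h3 := Real.log_le_log (mul_pos (hπ_pos k) hpk) h1
          rw [Real.log_mul (ne_of_gt (hπ_pos k)) (ne_of_gt hpk)] at h3
          linarith
        have h4 : f x ≤ p k x * (-Real.log (π k)) :=
          mul_le_mul_of_nonneg_left h2 hpk.le
        have h5 : -Real.log (π k) ≤ |Real.log (π k)| := neg_le_abs _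
        nlinarith [mul_le_mul_of_nonneg_left h5 hpk.le]
      -- lower bound
      have hlb : -f x ≤ (M * Real.log 2) * p k x
          + ∑ j, |p k x * Real.log (p k x / p j x)| := by
        have hsum_le : mix x ≤ ∑ j, p j x := by
          apply Finset.sum_le_sum
          intro j _
          have hπ1 : π j ≤ 1 := by
            rw [← hπ_sum]
            exact Finset.single_le_sum (fun i _ => (hπ_pos i).le) (Finset.mem_univ j)
          exact mul_le_of_le_one_left (hp_nonneg j x) hπ1
        have hprod : (∑ j, p j x) / p k x ≤ ∏ j, (1 + p j x / p k x) := by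
          rw [Finset.sum_div]
          exact aux_sum_le_prod_one_add _ _ (fun j _ => (div_pos (hpj j) hpk).le)
        have hdiv : mix x / p k x ≤ ∏ j, (1 + p j x / p k x) := by
          refine le_trans ?_ hprod
          gcongr
        have hlog1 : Real.log (mix x) - Real.log (p k x)
            ≤ ∑ j, (Real.log 2 + |Real.log (p j x / p k x)|) := by
          rw [← Real.log_div (ne_of_gt hmix_pos) (ne_of_gt hpk)]
          have h1 : Real.log (mix x / p k x) ≤ Real.log (∏ j, (1 + p j x / p k x)) :=
            Real.log_le_log (div_pos hmix_pos hpk) hdiv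
          rw [Real.log_prod (fun j _ => ne_of_gt (by have := div_pos (hpj j) hpk; linarith))] at h1
          exact h1.trans (Finset.sum_le_sum fun j _ =>
            aux_log_one_add_le _ (div_pos (hpj j) hpk))
        have hterm : ∀ j, p k x * |Real.log (p j x / p k x)|
            = |p k x * Real.log (p k x / p j x)| := by
          intro j
          rw [Real.log_div (ne_of_gt (hpj j)) (ne_of_gt hpk),
            Real.log_div (ne_of_gt hpk) (ne_of_gt (hpj j)), abs_mul,
            abs_of_pos hpk, abs_sub_comm]
        have h6 : p k x * (Real.log (mix x) - Real.log (p k x))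
            ≤ p k x * ∑ j, (Real.log 2 + |Real.log (p j x / p k x)|) :=
          mul_le_mul_of_nonneg_left hlog1 hpk.le
        have h7 : p k x * ∑ j, (Real.log 2 + |Real.log (p j x / p k x)|)
            = (M * Real.log 2) * p k x + ∑ j, |p k x * Real.log (p k x / p j x)| := by
          rw [Finset.mul_sum]
          rw [Finset.sum_congr rfl fun j _ => by rw [mul_add, hterm j]]
          rw [Finset.sum_add_distrib, Finset.sum_const, Finset.card_univ,
            Fintype.card_fin, nsmul_eq_mul]
          ring
        have h8 : -f x = p k x * (Real.log (mix x) - Real.log (p k x)) := by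
          simp only [hf]
          rw [Real.log_div (ne_of_gt hpk) (ne_of_gt hmix_pos)]
          ring
        rw [h8]
        rw [h7] at h6
        exact h6
      rw [Real.norm_eq_abs, abs_le]
      constructor
      · have : (0:ℝ) ≤ |Real.log (π k)| * p k x := by positivity
        linarith
      · have : (0:ℝ) ≤ (M * Real.log 2) * p k x := by positivity
        linarith
  have hf_int : Integrable f μ := by
    refine Integrable.mono' ?_ hf_meas habs
    exact (hpk_int.const_mul _).add (integrable_finset_sum _ fun j _ => (hint j).abs)
  have hle : ∫ x, f x ∂μ ≤ ∫ x, U x ∂μ := integral_mono_ae hf_int hU_int h_main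
  have hint2 : ∀ j, Integrable (fun x => p k x * Real.log (p k x / p j x) - D j * p k x) μ :=
    fun j => (hint j).sub (hpk_int.const_mul (D j))
  have hint3 : ∀ j, Integrable
      (fun x => w j * (p k x * Real.log (p k x / p j x) - D j * p k x)) μ :=
    fun j => (hint2 j).const_mul _
  have hpkc : Integrable (fun x => (-Real.log S) * p k x) μ := hpk_int.const_mul _
  have hsum_int : Integrable
      (fun x => ∑ j, w j * (p k x * Real.log (p k x / p j x) - D j * p k x)) μ :=
    integrable_finset_sum _ fun j _ => hint3 j
  have hUval : ∫ x, U x ∂μ = -Real.log S := by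
    simp only [hU]
    rw [integral_add hpkc hsum_int]
    rw [integral_const_mul, hp_prob k, mul_one]
    rw [integral_finset_sum _ (fun j _ => hint3 j)]
    have hz : ∀ j, ∫ x, w j * (p k x * Real.log (p k x / p j x) - D j * p k x) ∂μ = 0 := by
      intro j
      rw [integral_const_mul, integral_sub (hint j) (hpk_int.const_mul (D j)),
        integral_const_mul, hp_prob k, mul_one]
      simp [hD]
    rw [Finset.sum_congr rfl fun j _ => hz j]
    simp
  calc ∫ x, f x ∂μ ≤ ∫ x, U x ∂μ := hle
    _ = -Real.log S := hUval

end Aux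

/-- **Mutual information upper bound via pairwise KL affinities.**
For probability densities `p k` w.r.t. a σ-finite measure `μ`, positive priors `π`
summing to 1, mixture `mix = Σ_j π j • p j`, assuming every pairwise divergence
`D (p k ‖ p j) = ∫ p k ln (p k / p j) dμ` is well-defined and finite, one has
`Σ_k π k D (p k ‖ mix) ≤ - Σ_k π k ln (Σ_j π j exp (- D (p k ‖ p j)))`. -/
theorem mutual_information_upper_bound_via_KL_affinities
    {Ω : Type*} [MeasurableSpace Ω] (μ : Measure Ω) [SigmaFinite μ]
    (M : ℕ) (p : Fin M → Ω → ℝ) (π : Fin M → ℝ)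
    (hp_meas : ∀ k, Measurable (p k))
    (hp_nonneg : ∀ k, ∀ x, 0 ≤ p k x)
    (hp_prob : ∀ k, ∫ x, p k x ∂μ = 1)
    (hπ_pos : ∀ k, 0 < π k) (hπ_sum : ∑ k, π k = 1)
    -- each `D (p k ‖ p j)` is well-defined: `p k` vanishes a.e. where `p j` does,
    -- and the defining integrand is (absolutely) integrable
    (hac : ∀ k j, ∀ᵐ x ∂μ, p j x = 0 → p k x = 0)
    (hint : ∀ k j, Integrable (fun x => p k x * Real.log (p k x / p j x)) μ) :
    ∑ k, π k * ∫ x, p k x * Real.log (p k x / (∑ j, π j * p j x)) ∂μ ≤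
      -∑ k, π k *
        Real.log (∑ j, π j * Real.exp (-∫ x, p k x * Real.log (p k x / p j x) ∂μ)) := by
  have h : ∀ k : Fin M, π k * ∫ x, p k x * Real.log (p k x / (∑ j, π j * p j x)) ∂μ
      ≤ π k * -(Real.log (∑ j, π j * Real.exp (-∫ x, p k x * Real.log (p k x / p j x) ∂μ))) :=
    fun k => mul_le_mul_of_nonneg_left
      (aux_key_step μ M p π k hp_meas hp_nonneg hp_prob hπ_pos hπ_sum (hac k) (hint k))
      (hπ_pos k).le
  calc ∑ k, π k * ∫ x, p k x * Real.log (p k x / (∑ j, π j * p j x)) ∂μ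
      ≤ ∑ k, π k * -(Real.log (∑ j, π j * Real.exp (-∫ x, p k x * Real.log (p k x / p j x) ∂μ))) :=
        Finset.sum_le_sum fun k _ => h k
    _ = -∑ k, π k * Real.log (∑ j, π j * Real.exp (-∫ x, p k x * Real.log (p k x / p j x) ∂μ)) := by
        rw [← Finset.sum_neg_distrib]
        exact Finset.sum_congr rfl fun k _ => by ring
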